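/- Let 0 ≤ α < 1, γ > 0, and h^{[1]}, …, h^{[T]} ∈ ℝ^d. Define d^{[t]} = −(γα/(1−α)) ∑_{τ=1}^t α^{t−τ} h^{[τ]}. Then ∑_{t=1}^T ‖d^{[t]}‖² ≤ (γ² α²/(1−α)^4) ∑_{t=1}^T ‖h^{[t]}‖². -/

import Mathlib

open Finset

lemma geom_le_aux (α : ℝ) (h0 : 0 ≤ α) (h1 : α < 1) (n : ℕ) :
    ∑ k ∈ Finset.range n, α ^ k ≤ 1 / (1 - α) := by
  have hne : α ≠ 1 := ne_of_lt h1
  have hpos : 0 < 1 - α := by linarith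
  rw [geom_sum_eq hne]
  have heq : (α ^ n - 1) / (α - 1) = (1 - α ^ n) / (1 - α) := by
    rw [div_eq_div_iff (by linarith) (by linarith)]; ring
  rw [heq]
  rw [div_le_div_iff_of_pos_right hpos]
  nlinarith [pow_nonneg h0 n]

lemma geom_Icc_sub_right (α : ℝ) (h0 : 0 ≤ α) (h1 : α < 1) (a b : ℕ) :
    ∑ τ ∈ Finset.Icc a b, α ^ (b - τ) ≤ 1 / (1 - α) := by
  have := geom_le_aux α h0 h1 (b + 1)
  refine le_trans ?_ this
  rw [show (∑ τ ∈ Finset.Icc a b, α ^ (b - τ))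
      = ∑ k ∈ (Finset.Icc a b).image (fun τ => b - τ), α ^ k from
    (Finset.sum_image (fun x hx y hy hxy => by
      simp only [Finset.mem_coe, Finset.mem_Icc] at hx hy; omega)).symm]
  apply Finset.sum_le_sum_of_subset_of_nonneg
  · intro k hk
    simp only [Finset.mem_image, Finset.mem_Icc] at hk
    simp only [Finset.mem_range]
    omega
  · exact fun k _ _ => pow_nonneg h0 k

lemma geom_Icc_sub_left (α : ℝ) (h0 : 0 ≤ α) (h1 : α < 1) (a b : ℕ) :
    ∑ t ∈ Finset.Icc a b, α ^ (t - a) ≤ 1 / (1 - α) := by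
  have := geom_le_aux α h0 h1 (b + 1)
  refine le_trans ?_ this
  rw [show (∑ t ∈ Finset.Icc a b, α ^ (t - a))
      = ∑ k ∈ (Finset.Icc a b).image (fun t => t - a), α ^ k from
    (Finset.sum_image (fun x hx y hy hxy => by
      simp only [Finset.mem_coe, Finset.mem_Icc] at hx hy; omega)).symm]
  apply Finset.sum_le_sum_of_subset_of_nonneg
  · intro k hk
    simp only [Finset.mem_image, Finset.mem_Icc] at hk
    simp only [Finset.mem_range]
    omega
  · exact fun k _ _ => pow_nonneg h0 k

theorem momentum_deviation_bound {dim : ℕ} (α γ : ℝ)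
    (hα0 : 0 ≤ α) (hα1 : α < 1) (hγ : 0 < γ) (T : ℕ)
    (h d : ℕ → EuclideanSpace ℝ (Fin dim))
    (hd : ∀ t, d t = (-(γ * α / (1 - α))) •
        ∑ τ ∈ Finset.Icc 1 t, α ^ (t - τ) • h τ) :
    ∑ t ∈ Finset.Icc 1 T, ‖d t‖^2 ≤
      (γ^2 * α^2 / (1 - α)^4) * ∑ t ∈ Finset.Icc 1 T, ‖h t‖^2 := by
  have h1α : (0:ℝ) < 1 - α := by linarith
  set c : ℝ := γ * α / (1 - α) with hc
  have hc0 : 0 ≤ c := div_nonneg (mul_nonneg hγ.le hα0) h1α.le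
  -- pointwise bound
  have key : ∀ t, ‖d t‖^2 ≤ c^2 / (1 - α) * ∑ τ ∈ Finset.Icc 1 t,
      α ^ (t - τ) * ‖h τ‖^2 := by
    intro t
    have hnorm : ‖d t‖ ≤ c * ∑ τ ∈ Finset.Icc 1 t, α ^ (t - τ) * ‖h τ‖ := by
      rw [hd t, norm_smul, norm_neg, Real.norm_eq_abs, abs_of_nonneg hc0]
      apply mul_le_mul_of_nonneg_left ?_ hc0
      refine (norm_sum_le _ _).trans (le_of_eq ?_)
      refine Finset.sum_congr rfl fun τ _ => ?_
      rw [norm_smul, Real.norm_eq_abs, abs_of_nonneg (pow_nonneg hα0 _)]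
    have hCS : (∑ τ ∈ Finset.Icc 1 t, α ^ (t - τ) * ‖h τ‖)^2
        ≤ (∑ τ ∈ Finset.Icc 1 t, α ^ (t - τ)) *
          ∑ τ ∈ Finset.Icc 1 t, α ^ (t - τ) * ‖h τ‖^2 := by
      have := Finset.sum_mul_sq_le_sq_mul_sq (Finset.Icc 1 t)
        (fun τ => Real.sqrt (α ^ (t - τ)))
        (fun τ => Real.sqrt (α ^ (t - τ)) * ‖h τ‖)
      have e1 : ∀ τ : ℕ, Real.sqrt (α ^ (t - τ)) * (Real.sqrt (α ^ (t - τ)) * ‖h τ‖)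
          = α ^ (t - τ) * ‖h τ‖ := fun τ => by
        rw [← mul_assoc, Real.mul_self_sqrt (pow_nonneg hα0 _)]
      have e2 : ∀ τ : ℕ, Real.sqrt (α ^ (t - τ)) ^ 2 = α ^ (t - τ) := fun τ =>
        Real.sq_sqrt (pow_nonneg hα0 _)
      have e3 : ∀ τ : ℕ, (Real.sqrt (α ^ (t - τ)) * ‖h τ‖) ^ 2
          = α ^ (t - τ) * ‖h τ‖^2 := fun τ => by
        rw [mul_pow, e2]
      simp only [e1, e2, e3] at this
      exact this
    have hgeo := geom_Icc_sub_right α hα0 hα1 1 t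
    have hsum_nonneg : 0 ≤ ∑ τ ∈ Finset.Icc 1 t, α ^ (t - τ) * ‖h τ‖^2 :=
      Finset.sum_nonneg fun τ _ => mul_nonneg (pow_nonneg hα0 _) (sq_nonneg _)
    calc ‖d t‖^2 ≤ (c * ∑ τ ∈ Finset.Icc 1 t, α ^ (t - τ) * ‖h τ‖)^2 := by
          apply pow_le_pow_left₀ (norm_nonneg _) hnorm
      _ = c^2 * (∑ τ ∈ Finset.Icc 1 t, α ^ (t - τ) * ‖h τ‖)^2 := by ring
      _ ≤ c^2 * ((1 / (1 - α)) * ∑ τ ∈ Finset.Icc 1 t, α ^ (t - τ) * ‖h τ‖^2) := by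
          apply mul_le_mul_of_nonneg_left ?_ (sq_nonneg c)
          exact hCS.trans (mul_le_mul_of_nonneg_right hgeo hsum_nonneg)
      _ = c^2 / (1 - α) * ∑ τ ∈ Finset.Icc 1 t, α ^ (t - τ) * ‖h τ‖^2 := by ring
  -- sum up and swap
  have swap : (∑ t ∈ Finset.Icc 1 T, ∑ τ ∈ Finset.Icc 1 t, α ^ (t - τ) * ‖h τ‖^2)
      = ∑ τ ∈ Finset.Icc 1 T, ∑ t ∈ Finset.Icc τ T, α ^ (t - τ) * ‖h τ‖^2 := by
    rw [Finset.sum_comm' (t' := Finset.Icc 1 T) (s' := fun τ => Finset.Icc τ T)]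
    intro x y
    simp only [Finset.mem_Icc]
    omega
  have step2 : ∑ τ ∈ Finset.Icc 1 T, ∑ t ∈ Finset.Icc τ T, α ^ (t - τ) * ‖h τ‖^2
      ≤ (1 / (1 - α)) * ∑ τ ∈ Finset.Icc 1 T, ‖h τ‖^2 := by
    rw [Finset.mul_sum]
    apply Finset.sum_le_sum
    intro τ _
    rw [← Finset.sum_mul]
    calc (∑ t ∈ Finset.Icc τ T, α ^ (t - τ)) * ‖h τ‖^2
        ≤ (1 / (1 - α)) * ‖h τ‖^2 :=
          mul_le_mul_of_nonneg_right (geom_Icc_sub_left α hα0 hα1 τ T) (sq_nonneg _)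
      _ = 1 / (1 - α) * ‖h τ‖^2 := rfl
  have hcc : 0 ≤ c^2 / (1 - α) := div_nonneg (sq_nonneg c) h1α.le
  calc ∑ t ∈ Finset.Icc 1 T, ‖d t‖^2
      ≤ ∑ t ∈ Finset.Icc 1 T, c^2 / (1 - α) * ∑ τ ∈ Finset.Icc 1 t,
          α ^ (t - τ) * ‖h τ‖^2 := Finset.sum_le_sum fun t _ => key t
    _ = c^2 / (1 - α) * ∑ t ∈ Finset.Icc 1 T, ∑ τ ∈ Finset.Icc 1 t,
          α ^ (t - τ) * ‖h τ‖^2 := by rw [Finset.mul_sum]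
    _ ≤ c^2 / (1 - α) * ((1 / (1 - α)) * ∑ τ ∈ Finset.Icc 1 T, ‖h τ‖^2) := by
          apply mul_le_mul_of_nonneg_left ?_ hcc
          rw [swap]; exact step2
    _ = (γ^2 * α^2 / (1 - α)^4) * ∑ t ∈ Finset.Icc 1 T, ‖h t‖^2 := by
          rw [hc]; field_simp
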